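/- arXiv:1110.0682 — 2 statements merged into one kernel-verified Lean document; each statement's English description precedes it below -/
import Mathlib

section
/- For the trapezoid P with vertices (0,0), (α+k,0), (α,1), (0,1), the difference vector 𝔇 between the boundary barycenter (w.r.t. lattice measure) and the interior barycenter (w.r.t. area) equals (k(2α+k-1))/(12·|∂P|·|P|) · (k, -2), where |P| = α + k/2 and |∂P| = 2+2α+k. -/
open MeasureTheory

/-- The lattice length of the segment from `v` to `w`: the value `|u|` where
`w - v = u • (p, q)` for a primitive (coprime) integer vector `(p, q)`. -/
noncomputable def latticeLength (v w : ℝ × ℝ) : ℝ :=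
  sInf {r : ℝ | ∃ (u : ℝ) (p q : ℤ), IsCoprime p q ∧
    w - v = u • ((p : ℝ), (q : ℝ)) ∧ r = |u|}

/-- Integral of `f` over the segment from `v` to `w` with respect to the lattice
length measure dλ (equal to `latticeLength v w` times normalized length measure). -/
noncomputable def edgeInt (v w : ℝ × ℝ) (f : ℝ × ℝ → ℝ) : ℝ :=
  latticeLength v w * ∫ t in (0:ℝ)..(1:ℝ), f (v + t • (w - v))

/-- The trapezoid with vertices (0,0), (α+k,0), (α,1), (0,1). -/
noncomputable def trap (α k : ℝ) : Set (ℝ × ℝ) :=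
  convexHull ℝ ({(0, 0), (α + k, 0), (α, 1), (0, 1)} : Set (ℝ × ℝ))

noncomputable def trapArea (α k : ℝ) : ℝ := (volume (trap α k)).toReal

noncomputable def trapPerim (α k : ℝ) : ℝ :=
  latticeLength (0, 0) (α + k, 0) + latticeLength (α + k, 0) (α, 1) +
    latticeLength (α, 1) (0, 1) + latticeLength (0, 1) (0, 0)

noncomputable def trapCentroid (α k : ℝ) : ℝ × ℝ :=
  ((∫ p in trap α k, p.1) / trapArea α k, (∫ p in trap α k, p.2) / trapArea α k)

noncomputable def trapBdryInt (α k : ℝ) (f : ℝ × ℝ → ℝ) : ℝ :=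
  edgeInt (0, 0) (α + k, 0) f + edgeInt (α + k, 0) (α, 1) f +
    edgeInt (α, 1) (0, 1) f + edgeInt (0, 1) (0, 0) f

noncomputable def trapBdryBary (α k : ℝ) : ℝ × ℝ :=
  (trapBdryInt α k (fun p => p.1) / trapPerim α k,
   trapBdryInt α k (fun p => p.2) / trapPerim α k)

/-- The vector 𝔇 joining the interior barycenter to the boundary barycenter. -/
noncomputable def trapD (α k : ℝ) : ℝ × ℝ := trapBdryBary α k - trapCentroid α k

/-- The moment-of-inertia matrix Π of the trapezoid about its barycenter. -/
noncomputable def trapPi (α k : ℝ) : Matrix (Fin 2) (Fin 2) ℝ :=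
  !![∫ p in trap α k, (p.1 - (trapCentroid α k).1) * (p.1 - (trapCentroid α k).1),
     ∫ p in trap α k, (p.1 - (trapCentroid α k).1) * (p.2 - (trapCentroid α k).2);
     ∫ p in trap α k, (p.2 - (trapCentroid α k).2) * (p.1 - (trapCentroid α k).1),
     ∫ p in trap α k, (p.2 - (trapCentroid α k).2) * (p.2 - (trapCentroid α k).2)]

/-! ### Auxiliary lemmas -/

lemma latticeLength_horiz (v w : ℝ × ℝ) (d : ℝ) (hd : d ≠ 0) (h : w - v = (d, 0)) :
    latticeLength v w = |d| := by
  unfold latticeLength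
  rw [h]
  have hs : {r : ℝ | ∃ (u : ℝ) (p q : ℤ), IsCoprime p q ∧
      ((d, 0) : ℝ × ℝ) = u • ((p : ℝ), (q : ℝ)) ∧ r = |u|} = {|d|} := by
    ext r
    simp only [Set.mem_setOf_eq, Set.mem_singleton_iff]
    constructor
    · rintro ⟨u, p, q, hco, heq, rfl⟩
      have h1 : d = u * p := by
        have := congrArg Prod.fst heq; simpa [smul_eq_mul] using this
      have h2 : (0:ℝ) = u * q := by
        have := congrArg Prod.snd heq; simpa [smul_eq_mul] using this
      have hu : u ≠ 0 := by rintro rfl; simp at h1; exact hd h1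
      have hq : (q : ℝ) = 0 := by
        rcases mul_eq_zero.mp h2.symm with h | h
        · exact absurd h hu
        · exact h
      have hq0 : q = 0 := by exact_mod_cast hq
      subst hq0
      have hp : IsUnit p := isCoprime_zero_right.mp hco
      rcases Int.isUnit_iff.mp hp with rfl | rfl
      · simp at h1; rw [h1]
      · have : u = -d := by push_cast at h1; linarith
        rw [this, abs_neg]
    · rintro rfl
      exact ⟨d, 1, 0, isCoprime_one_left, by simp, rfl⟩
  rw [hs, csInf_singleton]

lemma latticeLength_unit (v w : ℝ × ℝ) (m e : ℤ) (he : e = 1 ∨ e = -1)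
    (h : w - v = ((m : ℝ), (e : ℝ))) : latticeLength v w = 1 := by
  unfold latticeLength
  rw [h]
  have he' : (e : ℝ) ≠ 0 := by rcases he with rfl | rfl <;> norm_num
  have hs : {r : ℝ | ∃ (u : ℝ) (p q : ℤ), IsCoprime p q ∧
      (((m:ℝ), (e:ℝ)) : ℝ × ℝ) = u • ((p : ℝ), (q : ℝ)) ∧ r = |u|} = {1} := by
    ext r
    simp only [Set.mem_setOf_eq, Set.mem_singleton_iff]
    constructor
    · rintro ⟨u, p, q, hco, heq, rfl⟩
      have h1 : (m:ℝ) = u * p := by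
        have := congrArg Prod.fst heq; simpa [smul_eq_mul] using this
      have h2 : (e:ℝ) = u * q := by
        have := congrArg Prod.snd heq; simpa [smul_eq_mul] using this
      have hu : u ≠ 0 := by rintro rfl; rw [zero_mul] at h2; exact he' h2
      have hmq : ((m * q : ℤ) : ℝ) = ((e * p : ℤ) : ℝ) := by
        push_cast; linear_combination (q : ℝ) * h1 - (p : ℝ) * h2
      have hmq' : m * q = e * p := by exact_mod_cast hmq
      have hdvd : q ∣ p := by
        rcases he with rfl | rfl
        · exact ⟨m, by linarith [hmq']⟩
        · exact ⟨-m, by linarith [hmq']⟩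
      have hq : IsUnit q := hco.isUnit_of_dvd' hdvd dvd_rfl
      rcases Int.isUnit_iff.mp hq with rfl | rfl <;> rcases he with rfl | rfl <;>
          push_cast at h2
      · rw [mul_one] at h2; rw [← h2]; norm_num
      · rw [mul_one] at h2; rw [← h2]; norm_num
      · have : u = -1 := by linarith
        rw [this]; norm_num
      · have : u = 1 := by linarith
        rw [this]; norm_num
    · rintro rfl
      refine ⟨1, m, e, ?_, by simp, by simp⟩
      rcases he with rfl | rfl
      · exact isCoprime_one_right
      · exact IsCoprime.neg_right isCoprime_one_right
  rw [hs, csInf_singleton]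

lemma setIntegral_under_graph (g : ℝ → ℝ) (hg : Continuous g)
    (hg0 : ∀ y ∈ Set.Icc (0:ℝ) 1, 0 ≤ g y) (F : ℝ × ℝ → ℝ) (hF : Continuous F) :
    ∫ q in {q : ℝ × ℝ | q.1 ∈ Set.Icc (0:ℝ) 1 ∧ q.2 ∈ Set.Icc 0 (g q.1)}, F q =
      ∫ y in (0:ℝ)..1, ∫ x in (0:ℝ)..(g y), F (y, x) := by
  set S : Set (ℝ × ℝ) := {q : ℝ × ℝ | q.1 ∈ Set.Icc (0:ℝ) 1 ∧ q.2 ∈ Set.Icc 0 (g q.1)} with hS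
  have hclosed : IsClosed S := by
    have : S = ({q : ℝ × ℝ | 0 ≤ q.1} ∩ {q | q.1 ≤ 1}) ∩
        ({q : ℝ × ℝ | 0 ≤ q.2} ∩ {q | q.2 ≤ g q.1}) := by
      ext q; simp [hS, Set.mem_Icc, and_assoc]
    rw [this]
    exact ((isClosed_le continuous_const continuous_fst).inter
        (isClosed_le continuous_fst continuous_const)).inter
      ((isClosed_le continuous_const continuous_snd).inter
        (isClosed_le continuous_snd (hg.comp continuous_fst)))
  have hSm : MeasurableSet S := hclosed.measurableSet
  obtain ⟨ymax, hym, hymax⟩ := isCompact_Icc.exists_isMaxOn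
    (Set.nonempty_Icc.mpr zero_le_one) (hg.continuousOn (s := Set.Icc (0:ℝ) 1))
  have hcmp : IsCompact S := by
    apply IsCompact.of_isClosed_subset (isCompact_Icc (a := ((0:ℝ),(0:ℝ))) (b := (1, g ymax)))
      hclosed
    rintro ⟨y, x⟩ ⟨hy, hx⟩
    refine ⟨⟨hy.1, hx.1⟩, ⟨hy.2, hx.2.trans (hymax hy)⟩⟩
  have hIntOn : IntegrableOn F S := hF.continuousOn.integrableOn_compact hcmp
  have hInd : Integrable (S.indicator F) (volume : Measure (ℝ × ℝ)) :=
    (integrable_indicator_iff hSm).2 hIntOn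
  calc ∫ q in S, F q = ∫ q, S.indicator F q := (integral_indicator hSm).symm
    _ = ∫ q, S.indicator F q ∂((volume : Measure ℝ).prod volume) := by
        rw [← Measure.volume_eq_prod]
    _ = ∫ y, ∫ x, S.indicator F (y, x) := by
        rw [integral_prod _ (by rwa [← Measure.volume_eq_prod])]
    _ = ∫ y, (Set.Icc (0:ℝ) 1).indicator
          (fun y => ∫ x in Set.Icc 0 (g y), F (y, x)) y := by
        congr 1; funext y
        by_cases hy : y ∈ Set.Icc (0:ℝ) 1
        · rw [Set.indicator_of_mem hy]
          have : (fun x => S.indicator F (y, x)) =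
              (Set.Icc (0:ℝ) (g y)).indicator (fun x => F (y, x)) := by
            funext x
            by_cases hx : x ∈ Set.Icc (0:ℝ) (g y)
            · rw [Set.indicator_of_mem hx, Set.indicator_of_mem (by exact ⟨hy, hx⟩)]
            · rw [Set.indicator_of_notMem hx,
                Set.indicator_of_notMem (fun hmem => hx hmem.2)]
          rw [this, integral_indicator measurableSet_Icc]
        · rw [Set.indicator_of_notMem hy]
          have : (fun x => S.indicator F (y, x)) = fun _ => (0:ℝ) := by
            funext x
            exact Set.indicator_of_notMem (fun hmem => hy hmem.1) _
          rw [this, integral_zero]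
    _ = ∫ y in Set.Icc (0:ℝ) 1, ∫ x in Set.Icc 0 (g y), F (y, x) :=
        integral_indicator measurableSet_Icc
    _ = ∫ y in (0:ℝ)..1, ∫ x in (0:ℝ)..(g y), F (y, x) := by
        rw [intervalIntegral.integral_of_le zero_le_one,
          ← integral_Icc_eq_integral_Ioc]
        refine setIntegral_congr_fun measurableSet_Icc (fun y hy => ?_)
        rw [intervalIntegral.integral_of_le (hg0 y hy), ← integral_Icc_eq_integral_Ioc]

lemma trap_eq (α k : ℝ) (hα : 0 < α) (hk : 0 ≤ k) :
    trap α k = {p : ℝ × ℝ | p.2 ∈ Set.Icc (0:ℝ) 1 ∧ p.1 ∈ Set.Icc 0 (α + k * (1 - p.2))} := by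
  apply Set.Subset.antisymm
  · apply convexHull_min
    · rintro p hp
      simp only [Set.mem_insert_iff, Set.mem_singleton_iff] at hp
      rcases hp with rfl | rfl | rfl | rfl <;>
        simp only [Set.mem_setOf_eq, Set.mem_Icc] <;> constructor <;>
        constructor <;> nlinarith
    · rintro p ⟨⟨hy0, hy1⟩, hx0, hx1⟩ q ⟨⟨hy0', hy1'⟩, hx0', hx1'⟩ a b ha hb hab
      simp only [Set.mem_setOf_eq, Set.mem_Icc, Prod.fst_add, Prod.snd_add,
        Prod.smul_fst, Prod.smul_snd, smul_eq_mul]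
      refine ⟨⟨by nlinarith, by nlinarith⟩, by nlinarith, by nlinarith⟩
  · rintro ⟨x, y⟩ ⟨⟨hy0, hy1⟩, hx0, hx1⟩
    simp only [Set.mem_Icc] at hx0 hx1 hy0 hy1 ⊢
    set g : ℝ := α + k * (1 - y) with hgdef
    have hg : 0 < g := by nlinarith
    have hA : ((0:ℝ), y) ∈ trap α k := by
      have h1 : ((0:ℝ), (0:ℝ)) ∈ trap α k := subset_convexHull ℝ _ (by simp)
      have h2 : ((0:ℝ), (1:ℝ)) ∈ trap α k := subset_convexHull ℝ _ (by simp)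
      have := (convex_convexHull ℝ _) h1 h2 (by linarith : (0:ℝ) ≤ 1 - y) hy0 (by ring)
      convert this using 1
      · rfl
      ext <;> simp
    have hB : ((g:ℝ), y) ∈ trap α k := by
      have h1 : ((α + k : ℝ), (0:ℝ)) ∈ trap α k := subset_convexHull ℝ _ (by simp)
      have h2 : ((α:ℝ), (1:ℝ)) ∈ trap α k := subset_convexHull ℝ _ (by simp)
      have := (convex_convexHull ℝ _) h1 h2 (by linarith : (0:ℝ) ≤ 1 - y) hy0 (by ring)
      convert this using 1
      · rfl
      ext
      · simp [hgdef]; ring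
      · simp
    have hxg : x / g ≤ 1 := by
      rw [div_le_one hg]; exact hx1
    have hxg0 : 0 ≤ x / g := div_nonneg hx0 hg.le
    have := (convex_convexHull ℝ _) hA hB
      (by linarith : (0:ℝ) ≤ 1 - x / g) hxg0 (by ring)
    convert this using 1
    · rfl
    ext
    · simp only [Prod.fst_add, Prod.smul_fst, smul_eq_mul]
      field_simp
      ring
    · simp only [Prod.snd_add, Prod.smul_snd, smul_eq_mul]
      ring

lemma trap_integral (α k : ℝ) (hα : 0 < α) (hk : 0 ≤ k) (F : ℝ × ℝ → ℝ) (hF : Continuous F) :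
    ∫ p in trap α k, F p = ∫ y in (0:ℝ)..1, ∫ x in (0:ℝ)..(α + k * (1 - y)), F (x, y) := by
  rw [trap_eq α k hα hk]
  set S : Set (ℝ × ℝ) := {q : ℝ × ℝ | q.1 ∈ Set.Icc (0:ℝ) 1 ∧
    q.2 ∈ Set.Icc 0 (α + k * (1 - q.1))} with hSdef
  have himg : {p : ℝ × ℝ | p.2 ∈ Set.Icc (0:ℝ) 1 ∧ p.1 ∈ Set.Icc 0 (α + k * (1 - p.2))} =
      Prod.swap '' S := by
    rw [Set.image_swap_eq_preimage_swap]
    rfl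
  rw [himg]
  have hswap : ∫ p in Prod.swap '' S, F p =
      ∫ q in S, F (Prod.swap q) := by
    rw [Measure.volume_eq_prod]
    exact Measure.measurePreserving_swap.setIntegral_image_emb
      MeasurableEquiv.prodComm.measurableEmbedding F S
  rw [hswap]
  have := setIntegral_under_graph (fun y => α + k * (1 - y))
    (by continuity) (fun y hy => by show 0 ≤ α + k * (1 - y); nlinarith [hy.1, hy.2])
    (fun q => F (q.2, q.1)) (hF.comp (by continuity))
  exact this

lemma int_poly (c0 c1 c2 : ℝ) :
    ∫ t in (0:ℝ)..1, (c0 + c1 * t + c2 * t ^ 2) = c0 + c1 / 2 + c2 / 3 := by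
  have h1 : IntervalIntegrable (fun t : ℝ => c0 + c1 * t) volume 0 1 :=
    (by continuity : Continuous fun t : ℝ => c0 + c1 * t).intervalIntegrable _ _
  have h2 : IntervalIntegrable (fun t : ℝ => c2 * t ^ 2) volume 0 1 :=
    (by continuity : Continuous fun t : ℝ => c2 * t ^ 2).intervalIntegrable _ _
  have h3 : IntervalIntegrable (fun t : ℝ => (c0 : ℝ)) volume 0 1 :=
    intervalIntegrable_const
  have h4 : IntervalIntegrable (fun t : ℝ => c1 * t) volume 0 1 :=
    (by continuity : Continuous fun t : ℝ => c1 * t).intervalIntegrable _ _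
  rw [intervalIntegral.integral_add h1 h2, intervalIntegral.integral_add h3 h4,
    intervalIntegral.integral_const, intervalIntegral.integral_const_mul,
    intervalIntegral.integral_const_mul, integral_id, integral_pow]
  norm_num
  ring

lemma int_affine (a b : ℝ) : ∫ t in (0:ℝ)..1, (a + t * (b - a)) = (a + b) / 2 := by
  have hcongr := intervalIntegral.integral_congr (μ := volume) (a := (0:ℝ)) (b := 1)
    (f := fun t : ℝ => a + t * (b - a)) (g := fun t : ℝ => a + (b - a) * t + 0 * t ^ 2)
    (fun t _ => by ring)
  rw [hcongr, int_poly]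
  ring

theorem trap_D (α : ℝ) (k : ℕ) (hα : 0 < α) :
    trapD α k =
      (k * (2 * α + k - 1) / (12 * (2 + 2 * α + k) * (α + k / 2))) •
        (((k : ℝ), (-2 : ℝ)) : ℝ × ℝ) := by
  set K : ℝ := (k : ℝ) with hK
  have hk : (0:ℝ) ≤ K := Nat.cast_nonneg k
  -- lattice lengths of the four edges
  have LL1 : latticeLength (0, 0) (α + K, 0) = α + K := by
    rw [latticeLength_horiz _ _ (α + K) (by positivity) (by simp [Prod.ext_iff]),
      abs_of_pos (by positivity)]
  have LL2 : latticeLength (α + K, 0) (α, 1) = 1 := by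
    refine latticeLength_unit _ _ (-(k : ℤ)) 1 (Or.inl rfl) ?_
    simp [Prod.ext_iff, hK]
  have LL3 : latticeLength (α, 1) (0, 1) = α := by
    rw [latticeLength_horiz _ _ (-α) (by simp [hα.ne']) (by simp [Prod.ext_iff]),
      abs_neg, abs_of_pos hα]
  have LL4 : latticeLength (0, 1) (0, 0) = 1 := by
    refine latticeLength_unit _ _ 0 (-1) (Or.inr rfl) ?_
    simp [Prod.ext_iff]
  have hL : trapPerim α K = 2 + 2 * α + K := by
    unfold trapPerim
    rw [LL1, LL2, LL3, LL4]; ring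
  -- boundary integrals
  have hBx : trapBdryInt α K (fun p => p.1) = (α + K) ^ 2 / 2 + (α + K / 2) + α ^ 2 / 2 := by
    unfold trapBdryInt edgeInt
    rw [LL1, LL2, LL3, LL4]
    simp only [Prod.fst_add, Prod.smul_fst, Prod.fst_sub, smul_eq_mul]
    simp only [int_affine]
    ring
  have hBy : trapBdryInt α K (fun p => p.2) = α + 1 := by
    unfold trapBdryInt edgeInt
    rw [LL1, LL2, LL3, LL4]
    simp only [Prod.snd_add, Prod.smul_snd, Prod.snd_sub, smul_eq_mul]
    simp only [int_affine]
    ring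
  -- area
  have harea : trapArea α K = α + K / 2 := by
    unfold trapArea
    have h := trap_integral α K hα hk (fun _ => (1:ℝ)) continuous_const
    simp only [intervalIntegral.integral_const, smul_eq_mul, sub_zero, mul_one,
      setIntegral_const] at h
    change volume.real (trap α K) = _
    rw [h]
    have hcongr := intervalIntegral.integral_congr (μ := volume) (a := (0:ℝ)) (b := 1)
      (f := fun y : ℝ => α + K * (1 - y)) (g := fun y : ℝ => (α + K) + (-K) * y + 0 * y ^ 2)
      (fun y _ => by ring)
    rw [hcongr, int_poly]
    ring
  -- interior moments
  have hIx : ∫ p in trap α K, p.1 =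
      (α + K) ^ 2 / 2 - K * (α + K) / 2 + K ^ 2 / 6 := by
    have h := trap_integral α K hα hk (fun p => p.1) continuous_fst
    simp only at h
    rw [h]
    have hin : ∀ y : ℝ, (∫ x in (0:ℝ)..(α + K * (1 - y)), x) =
        (α + K) ^ 2 / 2 + (-(K * (α + K))) * y + (K ^ 2 / 2) * y ^ 2 := fun y => by
      rw [integral_id]; ring
    have hcongr := intervalIntegral.integral_congr (μ := volume) (a := (0:ℝ)) (b := 1)
      (f := fun y : ℝ => ∫ x in (0:ℝ)..(α + K * (1 - y)), x)
      (g := fun y : ℝ => (α + K) ^ 2 / 2 + (-(K * (α + K))) * y + (K ^ 2 / 2) * y ^ 2)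
      (fun y _ => hin y)
    rw [hcongr, int_poly]
    ring
  have hIy : ∫ p in trap α K, p.2 = (α + K) / 2 - K / 3 := by
    have h := trap_integral α K hα hk (fun p => p.2) continuous_snd
    simp only at h
    rw [h]
    have hin : ∀ y : ℝ, (∫ _x in (0:ℝ)..(α + K * (1 - y)), y) =
        0 + (α + K) * y + (-K) * y ^ 2 := fun y => by
      rw [intervalIntegral.integral_const, smul_eq_mul]; ring
    have hcongr := intervalIntegral.integral_congr (μ := volume) (a := (0:ℝ)) (b := 1)
      (f := fun y : ℝ => ∫ _x in (0:ℝ)..(α + K * (1 - y)), y)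
      (g := fun y : ℝ => 0 + (α + K) * y + (-K) * y ^ 2)
      (fun y _ => hin y)
    rw [hcongr, int_poly]
    ring
  -- assemble
  have hL0 : (2 + 2 * α + K) ≠ 0 := by positivity
  have hA0 : (α + K / 2) ≠ 0 := by positivity
  unfold trapD trapBdryBary trapCentroid
  rw [hBx, hBy, hL, harea, hIx, hIy]
  rw [Prod.ext_iff]
  constructor
  · simp only [Prod.fst_sub, Prod.smul_fst, smul_eq_mul]
    field_simp
    ring
  · simp only [Prod.snd_sub, Prod.smul_snd, smul_eq_mul]
    field_simp
    ring
end

section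
/- In the symmetric case α=β, the virtual action of the two-point blow-up of ℂP₂ computed from the pentagon satisfies 𝒜(α) = (9 + 96α + 396α² + 840α³ + 954α⁴ + 528α⁵ + 96α⁶)/(1 + 12α + 54α² + 120α³ + 138α⁴ + 72α⁵ + 12α⁶). -/
open MeasureTheory

/-- The pentagon with vertices (1,0), (α+1,0), (α+1,β+1), (0,β+1), (0,1). -/
noncomputable def pent (α β : ℝ) : Set (ℝ × ℝ) :=
  convexHull ℝ ({(1, 0), (α + 1, 0), (α + 1, β + 1), (0, β + 1), (0, 1)} : Set (ℝ × ℝ))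

noncomputable def pentArea (α β : ℝ) : ℝ := (volume (pent α β)).toReal

noncomputable def pentPerim (α β : ℝ) : ℝ :=
  latticeLength (1, 0) (α + 1, 0) + latticeLength (α + 1, 0) (α + 1, β + 1) +
    latticeLength (α + 1, β + 1) (0, β + 1) + latticeLength (0, β + 1) (0, 1) +
    latticeLength (0, 1) (1, 0)

noncomputable def pentCentroid (α β : ℝ) : ℝ × ℝ :=
  ((∫ p in pent α β, p.1) / pentArea α β, (∫ p in pent α β, p.2) / pentArea α β)

noncomputable def pentBdryInt (α β : ℝ) (f : ℝ × ℝ → ℝ) : ℝ :=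
  edgeInt (1, 0) (α + 1, 0) f + edgeInt (α + 1, 0) (α + 1, β + 1) f +
    edgeInt (α + 1, β + 1) (0, β + 1) f + edgeInt (0, β + 1) (0, 1) f +
    edgeInt (0, 1) (1, 0) f

noncomputable def pentBdryBary (α β : ℝ) : ℝ × ℝ :=
  (pentBdryInt α β (fun p => p.1) / pentPerim α β,
   pentBdryInt α β (fun p => p.2) / pentPerim α β)

/-- The vector 𝔇 joining the interior barycenter to the boundary barycenter. -/
noncomputable def pentD (α β : ℝ) : ℝ × ℝ := pentBdryBary α β - pentCentroid α β

/-- The moment-of-inertia matrix Π of the pentagon about its barycenter. -/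
noncomputable def pentPi (α β : ℝ) : Matrix (Fin 2) (Fin 2) ℝ :=
  !![∫ p in pent α β, (p.1 - (pentCentroid α β).1) * (p.1 - (pentCentroid α β).1),
     ∫ p in pent α β, (p.1 - (pentCentroid α β).1) * (p.2 - (pentCentroid α β).2);
     ∫ p in pent α β, (p.2 - (pentCentroid α β).2) * (p.1 - (pentCentroid α β).1),
     ∫ p in pent α β, (p.2 - (pentCentroid α β).2) * (p.2 - (pentCentroid α β).2)]


section Aux
open intervalIntegral Set
lemma latticeLength_spec (v w : ℝ × ℝ) (c : ℝ) (hc : c ≠ 0) (p q : ℤ) (hpq : IsCoprime p q)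
    (h : w - v = (c * p, c * q)) : latticeLength v w = |c| := by
  have hset : {r : ℝ | ∃ (u : ℝ) (p' q' : ℤ), IsCoprime p' q' ∧
      w - v = u • ((p' : ℝ), (q' : ℝ)) ∧ r = |u|} = {|c|} := by
    ext r
    simp only [Set.mem_setOf_eq, Set.mem_singleton_iff]
    constructor
    · rintro ⟨u, p', q', hco, he, rfl⟩
      rw [h] at he
      have e1 : c * p = u * p' := congrArg Prod.fst he
      have e2 : c * q = u * q' := congrArg Prod.snd he
      obtain ⟨m, n, hmn⟩ := hpq
      obtain ⟨m', n', hmn'⟩ := hco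
      have hmnR : (m : ℝ) * p + n * q = 1 := by exact_mod_cast congrArg (Int.cast : ℤ → ℝ) hmn
      have hmnR' : (m' : ℝ) * p' + n' * q' = 1 := by exact_mod_cast congrArg (Int.cast : ℤ → ℝ) hmn'
      have h1 : u = c * ((m' * p + n' * q : ℤ) : ℝ) := by
        push_cast
        calc u = u * ((m' : ℝ) * p' + n' * q') := by rw [hmnR']; ring
        _ = (m' : ℝ) * (u * p') + n' * (u * q') := by ring
        _ = (m' : ℝ) * (c * p) + n' * (c * q) := by rw [← e1, ← e2]
        _ = c * ((m' : ℝ) * p + n' * q) := by ring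
      have h2 : c = u * ((m * p' + n * q' : ℤ) : ℝ) := by
        push_cast
        calc c = c * ((m : ℝ) * p + n * q) := by rw [hmnR]; ring
        _ = (m : ℝ) * (c * p) + n * (c * q) := by ring
        _ = (m : ℝ) * (u * p') + n * (u * q') := by rw [e1, e2]
        _ = u * ((m : ℝ) * p' + n * q') := by ring
      set k : ℤ := m' * p + n' * q
      set l : ℤ := m * p' + n * q'
      rw [h1] at h2
      have hklR : c * ((k : ℝ) * l) = c * 1 := by linear_combination -h2
      have hkl : (k : ℝ) * l = 1 := mul_left_cancel₀ hc hklR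
      have hkl' : k * l = 1 := by exact_mod_cast hkl
      rcases Int.eq_one_or_neg_one_of_mul_eq_one' hkl' with ⟨hk, _⟩ | ⟨hk, _⟩ <;>
        rw [h1, hk] <;> push_cast <;> simp [abs_mul]
    · rintro rfl
      exact ⟨c, p, q, hpq, by rw [h]; simp [Prod.smul_def], rfl⟩
  rw [latticeLength, hset, csInf_singleton]


lemma poly_int (c0 c1 c2 c3 c4 l u : ℝ) :
    ∫ x in l..u, (c0 + c1*x + c2*x^2 + c3*x^3 + c4*x^4) =
      c0*(u-l) + c1*(u^2-l^2)/2 + c2*(u^3-l^3)/3 + c3*(u^4-l^4)/4 + c4*(u^5-l^5)/5 := by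
  have I : ∀ n : ℕ, IntervalIntegrable (fun x : ℝ => x ^ n) volume l u :=
    fun n => (continuous_pow n).intervalIntegrable l u
  have Ic : ∀ (c : ℝ) (n : ℕ), IntervalIntegrable (fun x : ℝ => c * x ^ n) volume l u :=
    fun c n => (continuous_const.mul (continuous_pow n)).intervalIntegrable l u
  have e : (fun x : ℝ => c0 + c1*x + c2*x^2 + c3*x^3 + c4*x^4)
      = fun x : ℝ => c0 * x ^ 0 + c1 * x ^ 1 + c2 * x^2 + c3 * x^3 + c4 * x^4 := by
    funext x; ring
  rw [e, integral_add (((((Ic c0 0).add (Ic c1 1)).add (Ic c2 2)).add (Ic c3 3))) (Ic c4 4),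
    integral_add ((((Ic c0 0).add (Ic c1 1)).add (Ic c2 2))) (Ic c3 3),
    integral_add (((Ic c0 0).add (Ic c1 1))) (Ic c2 2),
    integral_add ((Ic c0 0)) (Ic c1 1),
    intervalIntegral.integral_const_mul, intervalIntegral.integral_const_mul, intervalIntegral.integral_const_mul, intervalIntegral.integral_const_mul,
    intervalIntegral.integral_const_mul, integral_pow, integral_pow, integral_pow, integral_pow, integral_pow]
  push_cast
  ring


def Tri : Set (ℝ × ℝ) := {p | 0 ≤ p.1 ∧ 0 ≤ p.2 ∧ p.1 + p.2 < 1}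
def Sq (a : ℝ) : Set (ℝ × ℝ) := Set.Icc 0 a ×ˢ Set.Icc 0 a
def Reg (a : ℝ) : Set (ℝ × ℝ) := Sq a \ Tri

lemma measurableSet_Tri : MeasurableSet Tri := by
  have : Tri = {p : ℝ × ℝ | 0 ≤ p.1} ∩ ({p | 0 ≤ p.2} ∩ {p | p.1 + p.2 < 1}) := rfl
  rw [this]
  exact (measurableSet_le measurable_const measurable_fst).inter
    ((measurableSet_le measurable_const measurable_snd).inter
      (measurableSet_lt (measurable_fst.add measurable_snd) measurable_const))

lemma Tri_subset_Sq {a : ℝ} (ha : 1 ≤ a) : Tri ⊆ Sq a := by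
  rintro ⟨x, y⟩ ⟨hx, hy, hxy⟩
  simp only [Sq, Set.mem_prod, Set.mem_Icc]
  dsimp at hx hy hxy
  exact ⟨⟨hx, by linarith⟩, hy, by linarith⟩

lemma fub (a : ℝ) (ha : 1 ≤ a) (f : ℝ × ℝ → ℝ) (hf : Continuous f) :
    ∫ z in Reg a, f z =
      (∫ x in (0:ℝ)..a, ∫ y in (0:ℝ)..a, f (x, y))
        - ∫ x in (0:ℝ)..1, ∫ y in (0:ℝ)..(1-x), f (x, y) := by
  have h0a : (0:ℝ) ≤ a := by linarith
  have hS : IntegrableOn f (Sq a) volume :=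
    hf.continuousOn.integrableOn_compact (isCompact_Icc.prod isCompact_Icc)
  rw [Reg, integral_diff measurableSet_Tri hS (Tri_subset_Sq ha)]
  congr 1
  · -- square part
    have hS' : IntegrableOn f (Set.Icc (0:ℝ) a ×ˢ Set.Icc (0:ℝ) a) (volume.prod volume) := by
      rw [← Measure.volume_eq_prod]; exact hS
    rw [show (∫ z in Sq a, f z) = ∫ z in Set.Icc (0:ℝ) a ×ˢ Set.Icc (0:ℝ) a,
          f z ∂(volume.prod volume) by rw [← Measure.volume_eq_prod]; rfl,
      setIntegral_prod f hS', integral_of_le h0a, ← integral_Icc_eq_integral_Ioc]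
    refine setIntegral_congr_fun measurableSet_Icc (fun x hx => ?_)
    rw [integral_of_le h0a, ← integral_Icc_eq_integral_Ioc]
  · -- triangle part
    have hT : IntegrableOn f Tri volume := hS.mono_set (Tri_subset_Sq ha)
    have hTi : Integrable (Tri.indicator f) (volume.prod volume) := by
      rw [← Measure.volume_eq_prod]
      exact (integrable_indicator_iff measurableSet_Tri).2 hT
    rw [← MeasureTheory.integral_indicator measurableSet_Tri,
      show (∫ z, Tri.indicator f z) = ∫ z, Tri.indicator f z ∂(volume.prod volume) by
        rw [← Measure.volume_eq_prod],
      integral_prod _ hTi]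
    have inner : ∀ x : ℝ, (∫ y, Tri.indicator f (x, y)) =
        (Set.Ico (0:ℝ) 1).indicator (fun x => ∫ y in (0:ℝ)..(1-x), f (x, y)) x := by
      intro x
      by_cases hx : x ∈ Set.Ico (0:ℝ) 1
      · obtain ⟨hx0, hx1⟩ := hx
        have hsec : (fun y => Tri.indicator f (x, y)) =
            (Set.Ico (0:ℝ) (1 - x)).indicator (fun y => f (x, y)) := by
          funext y
          by_cases hy : y ∈ Set.Ico (0:ℝ) (1 - x)
          · obtain ⟨hy0, hy1⟩ := hy
            rw [Set.indicator_of_mem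
                (show (x, y) ∈ Tri from ⟨hx0, hy0, by dsimp; linarith⟩) f,
              Set.indicator_of_mem (Set.mem_Ico.mpr ⟨hy0, hy1⟩)]
          · have hnot : (x, y) ∉ Tri := by
              intro hmem
              obtain ⟨_, h2, h3⟩ := hmem
              dsimp at h2 h3
              exact hy ⟨h2, by linarith⟩
            rw [Set.indicator_of_notMem hnot, Set.indicator_of_notMem hy]
        rw [hsec, MeasureTheory.integral_indicator measurableSet_Ico,
          Set.indicator_of_mem (Set.mem_Ico.mpr ⟨hx0, hx1⟩),
          integral_of_le (by linarith)]
        exact setIntegral_congr_set Ico_ae_eq_Ioc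
      · have hnot : ∀ y : ℝ, Tri.indicator f (x, y) = 0 := by
          intro y
          apply Set.indicator_of_notMem
          intro hmem
          obtain ⟨h1, h2, h3⟩ := hmem
          dsimp at h1 h2 h3
          exact hx ⟨h1, by linarith⟩
        simp only [hnot, MeasureTheory.integral_zero, Set.indicator_of_notMem hx]
    simp only [inner]
    rw [MeasureTheory.integral_indicator measurableSet_Ico, integral_of_le (by norm_num : (0:ℝ) ≤ 1)]
    exact setIntegral_congr_set Ico_ae_eq_Ioc

lemma Reg_eq_inter (a : ℝ) :
    Reg a = (Set.Icc 0 a ×ˢ Set.Icc 0 a) ∩ {p : ℝ × ℝ | 1 ≤ p.1 + p.2} := by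
  ext ⟨x, y⟩
  simp only [Reg, Sq, Tri, Set.mem_diff, Set.mem_inter_iff, Set.mem_prod, Set.mem_Icc,
    Set.mem_setOf_eq, not_and, not_lt]
  constructor
  · rintro ⟨⟨⟨hx0, hxa⟩, hy0, hya⟩, h2⟩
    exact ⟨⟨⟨hx0, hxa⟩, hy0, hya⟩, h2 hx0 hy0⟩
  · rintro ⟨⟨⟨hx0, hxa⟩, hy0, hya⟩, h2⟩
    exact ⟨⟨⟨hx0, hxa⟩, hy0, hya⟩, fun _ _ => h2⟩

lemma pent_eq (α : ℝ) (hα : 0 < α) : pent α α = Reg (α + 1) := by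
  set a : ℝ := α + 1 with ha_def
  have ha : 1 < a := by simp [ha_def]; linarith
  rw [Reg_eq_inter]
  apply Set.Subset.antisymm
  · apply convexHull_min
    · rintro p hp
      simp only [Set.mem_insert_iff, Set.mem_singleton_iff] at hp
      rcases hp with rfl | rfl | rfl | rfl | rfl <;>
        simp only [Set.mem_inter_iff, Set.mem_prod, Set.mem_Icc, Set.mem_setOf_eq] <;>
        refine ⟨⟨⟨?_, ?_⟩, ?_, ?_⟩, ?_⟩ <;> norm_num <;> linarith
    · exact ((convex_Icc _ _).prod (convex_Icc _ _)).inter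
        (convex_halfSpace_ge ⟨fun p q => by simp [Prod.fst_add, Prod.snd_add]; ring, fun c p => by simp [smul_eq_mul]; ring⟩ 1)
  · rintro ⟨x, y⟩ ⟨⟨⟨hx0, hxa⟩, hy0, hya⟩, hs⟩
    simp only [Set.mem_setOf_eq] at hs
    -- helper to conclude membership from centerMass
    have key : ∀ (w : Fin 3 → ℝ) (z : Fin 3 → ℝ × ℝ),
        (∀ i, 0 ≤ w i) → (0 < w 0 + w 1 + w 2) →
        (∀ i, z i ∈ ({(1, 0), (a, 0), (a, a), (0, a), (0, 1)} : Set (ℝ × ℝ))) →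
        ((w 0 + w 1 + w 2) • (x, y) = w 0 • z 0 + w 1 • z 1 + w 2 • z 2) →
        (x, y) ∈ pent α α := by
      intro w z hw hsum hz hcomb
      have := Finset.centerMass_mem_convexHull (t := Finset.univ) (w := w) (z := z)
        (fun i _ => hw i) (by rwa [Fin.sum_univ_three]) (fun i _ => hz i)
      have hcm : Finset.univ.centerMass w z = (x, y) := by
        rw [Finset.centerMass, Fin.sum_univ_three, Fin.sum_univ_three, ← hcomb,
          inv_smul_smul₀ (ne_of_gt hsum)]
      rw [hcm] at this
      simpa [pent, ha_def] using this
    by_cases h1 : (a - 1) * y ≤ a * (x - 1)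
    · -- triangle v1 v2 v3
      refine key ![a * (a - x), a * (x - 1) - (a - 1) * y, (a - 1) * y]
        ![(1, 0), (a, 0), (a, a)] ?_ ?_ ?_ ?_
      · intro i; fin_cases i <;> simp <;> nlinarith
      · simp; nlinarith
      · intro i; fin_cases i <;> simp
      · simp [Prod.smul_mk, Prod.ext_iff]; constructor <;> ring_nf <;> nlinarith [hs]
    · by_cases h2 : (a - 1) * x ≤ a * (y - 1)
      · -- triangle v5 v4 v3
        refine key ![a * (a - y), a * (y - 1) - (a - 1) * x, (a - 1) * x]
          ![(0, 1), (0, a), (a, a)] ?_ ?_ ?_ ?_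
        · intro i; fin_cases i <;> simp <;> nlinarith
        · simp; nlinarith
        · intro i; fin_cases i <;> simp
        · simp [Prod.smul_mk, Prod.ext_iff]; constructor <;> ring_nf <;> nlinarith [hs]
      · -- middle triangle v1 v5 v3
        push_neg at h1 h2
        refine key ![a * (1 + x - y) - x, a * (1 + y - x) - y, x + y - 1]
          ![(1, 0), (0, 1), (a, a)] ?_ ?_ ?_ ?_
        · intro i; fin_cases i <;> simp <;> nlinarith
        · simp; nlinarith
        · intro i; fin_cases i <;> simp
        · simp [Prod.smul_mk, Prod.ext_iff]; constructor <;> ring_nf <;> nlinarith [hs]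

lemma reg_one (a : ℝ) (ha : 1 ≤ a) : ∫ z in Reg a, (1:ℝ) = a^2 - 1/2 := by
  rw [fub a ha _ continuous_const]
  have i1 : (∫ y in (0:ℝ)..a, (1:ℝ)) = a := by
    rw [show (fun _ : ℝ => (1:ℝ)) = (fun y : ℝ => 1 + 0*y + 0*y^2 + 0*y^3 + 0*y^4) from
      funext fun y => by ring, poly_int]; ring
  have i2 : ∀ x : ℝ, (∫ y in (0:ℝ)..(1-x), (1:ℝ)) = 1 - x := by
    intro x
    rw [show (fun _ : ℝ => (1:ℝ)) = (fun y : ℝ => 1 + 0*y + 0*y^2 + 0*y^3 + 0*y^4) from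
      funext fun y => by ring, poly_int]; ring
  simp only [i1, i2]
  rw [show (fun _ : ℝ => a) = (fun x : ℝ => a + 0*x + 0*x^2 + 0*x^3 + 0*x^4) from
      funext fun x => by ring, poly_int,
    show (fun x : ℝ => 1 - x) = (fun x : ℝ => 1 + (-1)*x + 0*x^2 + 0*x^3 + 0*x^4) from
      funext fun x => by ring, poly_int]
  ring

lemma reg_x (a : ℝ) (ha : 1 ≤ a) : ∫ z in Reg a, z.1 = a^3/2 - 1/6 := by
  rw [fub a ha _ (by fun_prop)]
  have i1 : ∀ x : ℝ, (∫ y in (0:ℝ)..a, x) = x * a := by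
    intro x
    rw [show (fun y : ℝ => x) = (fun y : ℝ => x + 0*y + 0*y^2 + 0*y^3 + 0*y^4)
      from funext fun y => by ring, poly_int]; ring
  have i2 : ∀ x : ℝ, (∫ y in (0:ℝ)..(1-x), x) = x * (1 - x) := by
    intro x
    rw [show (fun y : ℝ => x) = (fun y : ℝ => x + 0*y + 0*y^2 + 0*y^3 + 0*y^4)
      from funext fun y => by ring, poly_int]; ring
  simp only [i1, i2]
  rw [show (fun x : ℝ => x * a) = (fun x : ℝ => 0 + a*x + 0*x^2 + 0*x^3 + 0*x^4) from
      funext fun x => by ring, poly_int,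
    show (fun x : ℝ => x * (1 - x)) = (fun x : ℝ => 0 + 1*x + (-1)*x^2 + 0*x^3 + 0*x^4) from
      funext fun x => by ring, poly_int]
  ring

lemma reg_y (a : ℝ) (ha : 1 ≤ a) : ∫ z in Reg a, z.2 = a^3/2 - 1/6 := by
  rw [fub a ha _ (by fun_prop)]
  have i1 : (∫ y in (0:ℝ)..a, y) = a^2/2 := by
    rw [show (fun y : ℝ => y) = (fun y : ℝ => 0 + 1*y + 0*y^2 + 0*y^3 + 0*y^4)
      from funext fun y => by ring, poly_int]; ring
  have i2 : ∀ x : ℝ, (∫ y in (0:ℝ)..(1-x), y) = (1-x)^2/2 := by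
    intro x
    rw [show (fun y : ℝ => y) = (fun y : ℝ => 0 + 1*y + 0*y^2 + 0*y^3 + 0*y^4)
      from funext fun y => by ring, poly_int]; ring
  simp only [i1, i2]
  rw [show (fun _ : ℝ => a^2/2) = (fun x : ℝ => a^2/2 + 0*x + 0*x^2 + 0*x^3 + 0*x^4) from
      funext fun x => by ring, poly_int,
    show (fun x : ℝ => (1-x)^2/2) = (fun x : ℝ => 1/2 + (-1)*x + (1/2)*x^2 + 0*x^3 + 0*x^4) from
      funext fun x => by ring, poly_int]
  ring

lemma reg_E11 (a c : ℝ) (ha : 1 ≤ a) :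
    ∫ z in Reg a, (z.1 - c) * (z.1 - c) =
      a^4/3 - a^3*c + a^2*c^2 - 1/12 + c/3 - c^2/2 := by
  rw [fub a ha _ (by fun_prop)]
  have i1 : ∀ x : ℝ, (∫ y in (0:ℝ)..a, (x - c) * (x - c))
      = (x - c) * (x - c) * a := by
    intro x
    rw [show (fun y : ℝ => (x - c) * (x - c))
        = (fun y : ℝ => (x-c)*(x-c) + 0*y + 0*y^2 + 0*y^3 + 0*y^4)
      from funext fun y => by ring, poly_int]; ring
  have i2 : ∀ x : ℝ, (∫ y in (0:ℝ)..(1-x), (x - c) * (x - c))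
      = (x - c) * (x - c) * (1 - x) := by
    intro x
    rw [show (fun y : ℝ => (x - c) * (x - c))
        = (fun y : ℝ => (x-c)*(x-c) + 0*y + 0*y^2 + 0*y^3 + 0*y^4)
      from funext fun y => by ring, poly_int]; ring
  simp only [i1, i2]
  rw [show (fun x : ℝ => (x - c) * (x - c) * a)
      = (fun x : ℝ => a*c^2 + (-2*a*c)*x + a*x^2 + 0*x^3 + 0*x^4) from
      funext fun x => by ring, poly_int,
    show (fun x : ℝ => (x - c) * (x - c) * (1 - x))
      = (fun x : ℝ => c^2 + (-2*c - c^2)*x + (1 + 2*c)*x^2 + (-1)*x^3 + 0*x^4) from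
      funext fun x => by ring, poly_int]
  ring

lemma reg_E22 (a c : ℝ) (ha : 1 ≤ a) :
    ∫ z in Reg a, (z.2 - c) * (z.2 - c) =
      a^4/3 - a^3*c + a^2*c^2 - 1/12 + c/3 - c^2/2 := by
  rw [fub a ha _ (by fun_prop)]
  have i1 : (∫ y in (0:ℝ)..a, (y - c) * (y - c))
      = c^2*a - c*a^2 + a^3/3 := by
    rw [show (fun y : ℝ => (y - c) * (y - c))
        = (fun y : ℝ => c^2 + (-2*c)*y + 1*y^2 + 0*y^3 + 0*y^4)
      from funext fun y => by ring, poly_int]; ring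
  have i2 : ∀ x : ℝ, (∫ y in (0:ℝ)..(1-x), (y - c) * (y - c))
      = c^2*(1-x) - c*(1-x)^2 + (1-x)^3/3 := by
    intro x
    rw [show (fun y : ℝ => (y - c) * (y - c))
        = (fun y : ℝ => c^2 + (-2*c)*y + 1*y^2 + 0*y^3 + 0*y^4)
      from funext fun y => by ring, poly_int]; ring
  simp only [i1, i2]
  rw [show (fun _ : ℝ => c^2*a - c*a^2 + a^3/3)
      = (fun x : ℝ => (c^2*a - c*a^2 + a^3/3) + 0*x + 0*x^2 + 0*x^3 + 0*x^4) from
      funext fun x => by ring, poly_int,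
    show (fun x : ℝ => c^2*(1-x) - c*(1-x)^2 + (1-x)^3/3)
      = (fun x : ℝ => (c^2 - c + 1/3) + (-c^2 + 2*c - 1)*x + (1 - c)*x^2 + (-1/3)*x^3 + 0*x^4) from
      funext fun x => by ring, poly_int]
  ring

lemma reg_E12 (a c : ℝ) (ha : 1 ≤ a) :
    ∫ z in Reg a, (z.1 - c) * (z.2 - c) =
      a^4/4 - a^3*c + a^2*c^2 - 1/24 + c/3 - c^2/2 := by
  rw [fub a ha _ (by fun_prop)]
  have i1 : ∀ x : ℝ, (∫ y in (0:ℝ)..a, (x - c) * (y - c))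
      = (x - c) * (a^2/2 - c*a) := by
    intro x
    rw [show (fun y : ℝ => (x - c) * (y - c))
        = (fun y : ℝ => (-(c*(x-c))) + (x-c)*y + 0*y^2 + 0*y^3 + 0*y^4)
      from funext fun y => by ring, poly_int]; ring
  have i2 : ∀ x : ℝ, (∫ y in (0:ℝ)..(1-x), (x - c) * (y - c))
      = (x - c) * ((1-x)^2/2 - c*(1-x)) := by
    intro x
    rw [show (fun y : ℝ => (x - c) * (y - c))
        = (fun y : ℝ => (-(c*(x-c))) + (x-c)*y + 0*y^2 + 0*y^3 + 0*y^4)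
      from funext fun y => by ring, poly_int]; ring
  simp only [i1, i2]
  rw [show (fun x : ℝ => (x - c) * (a^2/2 - c*a))
      = (fun x : ℝ => (-c*(a^2/2 - c*a)) + (a^2/2 - c*a)*x + 0*x^2 + 0*x^3 + 0*x^4) from
      funext fun x => by ring, poly_int,
    show (fun x : ℝ => (x - c) * ((1-x)^2/2 - c*(1-x)))
      = (fun x : ℝ => (-c*(1/2 - c)) + ((1/2 - c) - c*(c - 1))*x + ((c - 1) - c/2)*x^2 + (1/2)*x^3 + 0*x^4) from
      funext fun x => by ring, poly_int]
  ring

lemma reg_E21 (a c : ℝ) (ha : 1 ≤ a) :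
    ∫ z in Reg a, (z.2 - c) * (z.1 - c) =
      a^4/4 - a^3*c + a^2*c^2 - 1/24 + c/3 - c^2/2 := by
  rw [show (fun z : ℝ × ℝ => (z.2 - c) * (z.1 - c)) = (fun z : ℝ × ℝ => (z.1 - c) * (z.2 - c))
    from funext fun z => by ring]
  exact reg_E12 a c ha

lemma pentArea_eq (α : ℝ) (hα : 0 < α) : pentArea α α = (α+1)^2 - 1/2 := by
  have h1 : (∫ _z in Reg (α+1), (1:ℝ)) = (volume (Reg (α+1))).toReal • (1:ℝ) :=
    setIntegral_const 1
  have h2 := reg_one (α+1) (by linarith)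
  rw [h1, smul_eq_mul, mul_one] at h2
  rw [pentArea, pent_eq α hα, h2]

lemma lat1 (α : ℝ) (hα : 0 < α) : latticeLength (1, 0) (α + 1, 0) = α := by
  rw [latticeLength_spec _ _ α (ne_of_gt hα) 1 0 isCoprime_one_left
    (by norm_num [Prod.ext_iff])]
  exact abs_of_pos hα

lemma lat2 (α : ℝ) (hα : 0 < α) :
    latticeLength (α + 1, 0) (α + 1, α + 1) = α + 1 := by
  rw [latticeLength_spec _ _ (α+1) (by linarith) 0 1
    (isCoprime_zero_left.mpr isUnit_one) (by norm_num [Prod.ext_iff])]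
  exact abs_of_pos (by linarith)

lemma lat3 (α : ℝ) (hα : 0 < α) :
    latticeLength (α + 1, α + 1) (0, α + 1) = α + 1 := by
  rw [latticeLength_spec _ _ (-(α+1)) (by intro h; nlinarith [h]) 1 0 isCoprime_one_left
    (by norm_num [Prod.ext_iff])]
  rw [abs_neg]
  exact abs_of_pos (by linarith)

lemma lat4 (α : ℝ) (hα : 0 < α) : latticeLength (0, α + 1) (0, 1) = α := by
  rw [latticeLength_spec _ _ (-α) (by intro h; nlinarith [h]) 0 1
    (isCoprime_zero_left.mpr isUnit_one) (by norm_num [Prod.ext_iff])]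
  rw [abs_neg]
  exact abs_of_pos hα

lemma lat5 : latticeLength (0, 1) (1, 0) = 1 := by
  rw [latticeLength_spec _ _ 1 one_ne_zero 1 (-1) isCoprime_one_left
    (by norm_num [Prod.ext_iff])]
  exact abs_one

lemma perim_eq (α : ℝ) (hα : 0 < α) : pentPerim α α = 4*α + 3 := by
  rw [pentPerim, lat1 α hα, lat2 α hα, lat3 α hα, lat4 α hα, lat5]; ring

lemma seg_int_fst (v w : ℝ × ℝ) :
    ∫ t in (0:ℝ)..1, (v + t • (w - v)).1 = (v.1 + w.1)/2 := by
  rw [show (fun t : ℝ => (v + t • (w - v)).1)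
      = (fun t : ℝ => v.1 + (w.1 - v.1)*t + 0*t^2 + 0*t^3 + 0*t^4) from funext fun t => by
        simp [Prod.fst_add, Prod.smul_fst, Prod.fst_sub, smul_eq_mul]; ring, poly_int]
  ring

lemma seg_int_snd (v w : ℝ × ℝ) :
    ∫ t in (0:ℝ)..1, (v + t • (w - v)).2 = (v.2 + w.2)/2 := by
  rw [show (fun t : ℝ => (v + t • (w - v)).2)
      = (fun t : ℝ => v.2 + (w.2 - v.2)*t + 0*t^2 + 0*t^3 + 0*t^4) from funext fun t => by
        simp [Prod.snd_add, Prod.smul_snd, Prod.snd_sub, smul_eq_mul]; ring, poly_int]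
  ring

lemma bdry_fst (α : ℝ) (hα : 0 < α) :
    pentBdryInt α α (fun p => p.1) = 2*(α+1)^2 := by
  rw [pentBdryInt]
  simp only [edgeInt, lat1 α hα, lat2 α hα, lat3 α hα, lat4 α hα, lat5, seg_int_fst]
  norm_num
  ring

lemma bdry_snd (α : ℝ) (hα : 0 < α) :
    pentBdryInt α α (fun p => p.2) = 2*(α+1)^2 := by
  rw [pentBdryInt]
  simp only [edgeInt, lat1 α hα, lat2 α hα, lat3 α hα, lat4 α hα, lat5, seg_int_snd]
  norm_num
  ring

lemma inv_mul_helper (E Nv Av Lv Dv : ℝ) (hE : E ≠ 0) (hN : Nv ≠ 0) (hA : Av ≠ 0) (hL : Lv ≠ 0) :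
    (E * (Nv / Av))⁻¹ * (E * (Dv / (Av * Lv)) * (Dv / (Av * Lv)) * 2)
      = 2 * Dv ^ 2 / (Nv * Av * Lv ^ 2) := by
  field_simp

end Aux

set_option maxHeartbeats 2000000 in
theorem pent_symmetric_virtual_action (α : ℝ) (hα : 0 < α) :
    (pentPerim α α) ^ 2 / 2 *
        (1 / pentArea α α +
          dotProduct ![(pentD α α).1, (pentD α α).2]
            (Matrix.mulVec (pentPi α α)⁻¹ ![(pentD α α).1, (pentD α α).2])) =
      (9 + 96 * α + 396 * α ^ 2 + 840 * α ^ 3 + 954 * α ^ 4 + 528 * α ^ 5 + 96 * α ^ 6) /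
        (1 + 12 * α + 54 * α ^ 2 + 120 * α ^ 3 + 138 * α ^ 4 + 72 * α ^ 5 + 12 * α ^ 6) := by
  have ha1 : (1:ℝ) ≤ α + 1 := by linarith
  have hA : pentArea α α = (α+1)^2 - 1/2 := pentArea_eq α hα
  have hApos : (0:ℝ) < (α+1)^2 - 1/2 := by nlinarith
  have hIx : (∫ p in pent α α, p.1) = (α+1)^3/2 - 1/6 := by
    rw [pent_eq α hα]; exact reg_x _ ha1
  have hIy : (∫ p in pent α α, p.2) = (α+1)^3/2 - 1/6 := by
    rw [pent_eq α hα]; exact reg_y _ ha1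
  set c : ℝ := ((α+1)^3/2 - 1/6) / ((α+1)^2 - 1/2) with hc
  have hc1 : (pentCentroid α α).1 = c := by rw [pentCentroid]; dsimp only; rw [hIx, hA]
  have hc2 : (pentCentroid α α).2 = c := by rw [pentCentroid]; dsimp only; rw [hIy, hA]
  set P : ℝ := (α+1)^4/3 - (α+1)^3*c + (α+1)^2*c^2 - 1/12 + c/3 - c^2/2 with hP
  set Q : ℝ := (α+1)^4/4 - (α+1)^3*c + (α+1)^2*c^2 - 1/24 + c/3 - c^2/2 with hQ
  have hPi : pentPi α α = !![P, Q; Q, P] := by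
    rw [pentPi, hc1, hc2, pent_eq α hα,
      reg_E11 _ c ha1, reg_E12 _ c ha1, reg_E21 _ c ha1, reg_E22 _ c ha1]
  have hinv : (pentPi α α)⁻¹ = (P^2 - Q^2)⁻¹ • !![P, -Q; -Q, P] := by
    rw [hPi, Matrix.inv_def, Matrix.adjugate_fin_two_of, Matrix.det_fin_two_of,
      Ring.inverse_eq_inv']
    congr 1
    ring
  set d : ℝ := 2*(α+1)^2/(4*α+3) - c with hd
  have hd1 : (pentD α α).1 = d := by
    rw [pentD, Prod.fst_sub, pentBdryBary]
    dsimp only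
    rw [bdry_fst α hα, perim_eq α hα, hc1]
  have hd2 : (pentD α α).2 = d := by
    rw [pentD, Prod.snd_sub, pentBdryBary]
    dsimp only
    rw [bdry_snd α hα, perim_eq α hα, hc2]
  have hdot : dotProduct ![(pentD α α).1, (pentD α α).2]
      (Matrix.mulVec (pentPi α α)⁻¹ ![(pentD α α).1, (pentD α α).2])
      = (P^2 - Q^2)⁻¹ * ((P - Q) * d * d * 2) := by
    rw [hd1, hd2, hinv]
    simp [Matrix.mulVec, dotProduct, Fin.sum_univ_two]
    ring
  rw [hdot, perim_eq α hα, hA]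
  have e1 : P - Q = (α+1)^4/12 - 1/24 := by rw [hP, hQ]; ring
  have hne1 : ((α+1)^2 - 1/2 : ℝ) ≠ 0 := ne_of_gt hApos
  have hne2 : (4*α+3 : ℝ) ≠ 0 := by positivity
  have hcA : c * ((α+1)^2 - 1/2) = (α+1)^3/2 - 1/6 := by
    rw [hc, div_mul_cancel₀ _ hne1]
  have e2 : P + Q = (1/144 + α/12 + 3/8*α^2 + 5/6*α^3 + 23/24*α^4 + 1/2*α^5 + 1/12*α^6)
      / ((α+1)^2 - 1/2) := by
    rw [eq_div_iff hne1, hP, hQ]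
    linear_combination (2*(c*((α+1)^2 - 1/2) - ((α+1)^3/2 - 1/6))) * hcA
  have hdL : d * (4*α+3) = 2*(α+1)^2 - c*(4*α+3) := by
    rw [hd]; field_simp
  have ed : d = (α/6 + α^2/2 + α^3/2) / (((α+1)^2 - 1/2) * (4*α+3)) := by
    rw [eq_div_iff (mul_ne_zero hne1 hne2)]
    linear_combination (((α+1)^2 - 1/2)) * hdL + (-(4*α+3)) * hcA
  have hPQ : P^2 - Q^2 = ((α+1)^4/12 - 1/24) *
      ((1/144 + α/12 + 3/8*α^2 + 5/6*α^3 + 23/24*α^4 + 1/2*α^5 + 1/12*α^6)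
        / ((α+1)^2 - 1/2)) := by
    rw [← e1, ← e2]; ring
  have hne3 : ((α+1)^4/12 - 1/24 : ℝ) ≠ 0 := by nlinarith
  have hne4 : (1/144 + α/12 + 3/8*α^2 + 5/6*α^3 + 23/24*α^4 + 1/2*α^5 + 1/12*α^6 : ℝ) ≠ 0 := by
    positivity
  have hne5 : (1 + 12 * α + 54 * α ^ 2 + 120 * α ^ 3 + 138 * α ^ 4 + 72 * α ^ 5 + 12 * α ^ 6 : ℝ)
      ≠ 0 := by positivity
  have hterm : (P^2 - Q^2)⁻¹ * ((P - Q) * d * d * 2)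
      = 2 * (α/6 + α^2/2 + α^3/2) ^ 2 /
        ((1/144 + α/12 + 3/8*α^2 + 5/6*α^3 + 23/24*α^4 + 1/2*α^5 + 1/12*α^6) * ((α+1)^2 - 1/2) * (4*α+3) ^ 2) := by
    rw [hPQ, e1, ed]
    exact inv_mul_helper _ _ _ _ _ hne3 hne4 hne1 hne2
  rw [hterm]
  have hNAL : ((1/144 + α/12 + 3/8*α^2 + 5/6*α^3 + 23/24*α^4 + 1/2*α^5 + 1/12*α^6) * ((α+1)^2 - 1/2) * (4*α+3) ^ 2 : ℝ) ≠ 0 :=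
    mul_ne_zero (mul_ne_zero hne4 hne1) (pow_ne_zero 2 hne2)
  have hcomb : 1/((α+1)^2 - 1/2) + 2 * (α/6 + α^2/2 + α^3/2) ^ 2 /
        ((1/144 + α/12 + 3/8*α^2 + 5/6*α^3 + 23/24*α^4 + 1/2*α^5 + 1/12*α^6) * ((α+1)^2 - 1/2) * (4*α+3) ^ 2)
      = ((1/144 + α/12 + 3/8*α^2 + 5/6*α^3 + 23/24*α^4 + 1/2*α^5 + 1/12*α^6) * (4*α+3) ^ 2 + 2 * (α/6 + α^2/2 + α^3/2) ^ 2) /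
        ((1/144 + α/12 + 3/8*α^2 + 5/6*α^3 + 23/24*α^4 + 1/2*α^5 + 1/12*α^6) * ((α+1)^2 - 1/2) * (4*α+3) ^ 2) := by
    rw [div_add_div _ _ hne1 hNAL, div_eq_div_iff (mul_ne_zero hne1 hNAL) hNAL]
    ring
  rw [hcomb, ← mul_div_assoc, div_eq_div_iff hNAL hne5]
  ring
end
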